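/- Every permutation sortable on a deque can be sorted by a reduced run: a run in which, whenever an end element of the deque equals the next element required by the output, the very next operation pops that element to the output. -/

import Mathlib

/-- State of a deque switchyard: output so far, the deque, remaining input. -/
structure DState where
  output : List ℕ
  deque : List ℕ
  input : List ℕ

/-- One step of deque sorting: push the next input element to either end of the
deque, or pop either end element of the deque to the output. -/
inductive DequeStep : DState → DState → Prop
  | pushLeft (o d i : List ℕ) (x : ℕ) : DequeStep ⟨o, d, x :: i⟩ ⟨o, x :: d, i⟩
  | pushRight (o d i : List ℕ) (x : ℕ) : DequeStep ⟨o, d, x :: i⟩ ⟨o, d ++ [x], i⟩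
  | popLeft (o d i : List ℕ) (x : ℕ) : DequeStep ⟨o, x :: d, i⟩ ⟨o ++ [x], d, i⟩
  | popRight (o d i : List ℕ) (x : ℕ) : DequeStep ⟨o, d ++ [x], i⟩ ⟨o ++ [x], d, i⟩

/-- A permutation (as a list) is deque-sortable if some run outputs `1, 2, …, n`. -/
def DequeSortable (l : List ℕ) : Prop :=
  Relation.ReflTransGen DequeStep ⟨[], [], l⟩ ⟨List.range' 1 l.length, [], []⟩

def Dfinal (N : ℕ) : DState := ⟨List.range' 1 N, [], []⟩

def Good (s : DState) : Prop := (s.output ++ s.deque ++ s.input).Nodup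

lemma step_perm {a b : DState} (h : DequeStep a b) :
    (a.output ++ a.deque ++ a.input).Perm (b.output ++ b.deque ++ b.input) := by
  cases h <;>
    simp [List.perm_iff_count, List.count_append, List.count_cons] <;>
    intro y <;> split <;> omega

lemma good_step {a b : DState} (hg : Good a) (h : DequeStep a b) : Good b :=
  (step_perm h).nodup hg

lemma run_perm {N : ℕ} : ∀ (r : List DState) (s : DState),
    List.Chain' DequeStep (s :: r) → (s :: r).getLast? = some (Dfinal N) →
    (s.output ++ s.deque ++ s.input).Perm (List.range' 1 N) := by
  intro r
  induction r with
  | nil =>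
    intro s _ hlast
    simp at hlast
    subst hlast
    simp [Dfinal]
  | cons s₂ rest ih =>
    intro s hc hlast
    have h1 : DequeStep s s₂ := (List.isChain_cons_cons.mp hc).1
    have h2 := ih s₂ (List.isChain_cons_cons.mp hc).2 (by simpa using hlast)
    exact (step_perm h1).trans h2

lemma run_output_prefix {N : ℕ} : ∀ (r : List DState) (s : DState),
    List.Chain' DequeStep (s :: r) → (s :: r).getLast? = some (Dfinal N) →
    s.output <+: List.range' 1 N := by
  intro r
  induction r with
  | nil =>
    intro s _ hlast
    simp at hlast
    subst hlast
    simp [Dfinal]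
  | cons s₂ rest ih =>
    intro s hc hlast
    have h1 : DequeStep s s₂ := (List.isChain_cons_cons.mp hc).1
    have h2 := ih s₂ (List.isChain_cons_cons.mp hc).2 (by simpa using hlast)
    refine List.IsPrefix.trans ?_ h2
    cases h1 <;> simp

lemma prefix_snoc_val {o : List ℕ} {y N : ℕ} (h : (o ++ [y]) <+: List.range' 1 N) :
    y = o.length + 1 := by
  obtain ⟨t, ht⟩ := h
  have hN : o.length < N := by
    have := congrArg List.length ht
    simp at this
    omega
  have e1 : (List.range' 1 N)[o.length]? = some y := by
    rw [← ht, List.getElem?_append_left (by simp), List.getElem?_concat_length]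
  rw [List.getElem?_range' (s := 1) (step := 1) hN] at e1
  simp at e1
  omega

lemma mem_of_end {l : List ℕ} {x : ℕ}
    (h : l.head? = some x ∨ l.getLast? = some x) : x ∈ l := by
  rcases h with h | h
  · exact List.mem_of_mem_head? (by simp [h])
  · exact List.mem_of_mem_getLast? (by simp [h])

lemma not_stuck {N : ℕ} : ∀ (r : List DState) (s : DState) (x : ℕ),
    List.Chain' DequeStep (s :: r) → (s :: r).getLast? = some (Dfinal N) →
    Good s → x ∈ s.deque → x = s.output.length + 1 →
    s.deque.head? = some x ∨ s.deque.getLast? = some x := by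
  intro r
  induction r with
  | nil =>
    intro s x _ hlast _ hmem _
    simp at hlast
    subst hlast
    simp [Dfinal] at hmem
  | cons s₂ rest ih =>
    intro s x hc hlast hg hmem hx
    have h1 : DequeStep s s₂ := (List.isChain_cons_cons.mp hc).1
    have hc₂ := (List.isChain_cons_cons.mp hc).2
    have hlast₂ : (s₂ :: rest).getLast? = some (Dfinal N) := by simpa using hlast
    have hg₂ : Good s₂ := good_step hg h1
    cases h1 with
    | pushLeft o d i y =>
      simp only at hmem hx ⊢
      have hxy : x ≠ y := by
        have hd : List.Disjoint (o ++ d) (y :: i) := fun a ha hb => (List.nodup_append.mp hg).2.2 a ha a hb rfl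
        intro hE
        exact hd (show x ∈ o ++ d by simp [hmem]) (show x ∈ y :: i by simp [hE])
      have hend := ih _ x hc₂ hlast₂ hg₂ (by simp [hmem]) hx
      cases d with
      | nil => simp at hmem
      | cons a d' =>
        rcases hend with h | h
        · exfalso
          simp at h
          exact hxy h.symm
        · right
          simpa using h
    | pushRight o d i y =>
      simp only at hmem hx ⊢
      have hxy : x ≠ y := by
        have hd : List.Disjoint (o ++ d) (y :: i) := fun a ha hb => (List.nodup_append.mp hg).2.2 a ha a hb rfl
        intro hE
        exact hd (show x ∈ o ++ d by simp [hmem]) (show x ∈ y :: i by simp [hE])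
      have hend := ih _ x hc₂ hlast₂ hg₂ (by simp [hmem]) hx
      cases d with
      | nil => simp at hmem
      | cons a d' =>
        rcases hend with h | h
        · left; simpa using h
        · exfalso
          have h2 : ((a :: d') ++ [y]).getLast? = some x := h
          rw [List.getLast?_concat] at h2
          exact hxy (Option.some.inj h2).symm
    | popLeft o d i y =>
      have hpre : (o ++ [y]) <+: List.range' 1 N :=
        run_output_prefix (N := N) rest _ hc₂ hlast₂
      have := prefix_snoc_val hpre
      simp only at hx ⊢
      left
      simp
      omega
    | popRight o d i y =>
      have hpre : (o ++ [y]) <+: List.range' 1 N :=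
        run_output_prefix (N := N) rest _ hc₂ hlast₂
      have := prefix_snoc_val hpre
      simp only at hx ⊢
      right
      simp
      omega

lemma step_output_snoc {s t : DState} (h : DequeStep s t) {x : ℕ}
    (ho : t.output = s.output ++ [x]) :
    (s.deque.head? = some x ∧ t = ⟨s.output ++ [x], s.deque.tail, s.input⟩) ∨
    (s.deque.getLast? = some x ∧ t = ⟨s.output ++ [x], s.deque.dropLast, s.input⟩) := by
  cases h with
  | pushLeft o d i y => simp at ho
  | pushRight o d i y => simp at ho
  | popLeft o d i y =>
    have : y = x := by simpa using ho
    subst this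
    left
    simp
  | popRight o d i y =>
    have : y = x := by simpa using ho
    subst this
    right
    simp

lemma exchange {N : ℕ} : ∀ (r : List DState) (s : DState) (x : ℕ),
    List.Chain' DequeStep (s :: r) → (s :: r).getLast? = some (Dfinal N) →
    Good s →
    (s.deque.head? = some x ∨ s.deque.getLast? = some x) →
    x = s.output.length + 1 →
    ∃ (t : DState) (r' : List DState), DequeStep s t ∧
      t.output = s.output ++ [x] ∧
      List.Chain' DequeStep (t :: r') ∧ (t :: r').getLast? = some (Dfinal N) ∧
      r'.length < r.length := by
  intro r
  induction r with
  | nil =>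
    intro s x _ hlast _ hend _
    simp at hlast; subst hlast
    have := mem_of_end hend
    simp [Dfinal] at this
  | cons s₂ rest ih =>
    intro s x hc hlast hg hend hx
    have h1 : DequeStep s s₂ := (List.isChain_cons_cons.mp hc).1
    have hc₂ := (List.isChain_cons_cons.mp hc).2
    have hlast₂ : (s₂ :: rest).getLast? = some (Dfinal N) := by simpa using hlast
    have hg₂ : Good s₂ := good_step hg h1
    cases h1 with
    | popLeft o d i y =>
      have hy : y = o.length + 1 :=
        prefix_snoc_val (run_output_prefix (N := N) rest _ hc₂ hlast₂)
      have hxy : x = y := by simp only at hx; omega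
      refine ⟨⟨o ++ [y], d, i⟩, rest, DequeStep.popLeft o d i y, by simp [hxy], hc₂,
        hlast₂, by simp⟩
    | popRight o d i y =>
      have hy : y = o.length + 1 :=
        prefix_snoc_val (run_output_prefix (N := N) rest _ hc₂ hlast₂)
      have hxy : x = y := by simp only at hx; omega
      refine ⟨⟨o ++ [y], d, i⟩, rest, DequeStep.popRight o d i y, by simp [hxy], hc₂,
        hlast₂, by simp⟩
    | pushLeft o d i y =>
      simp only at hend hx
      have hmemd : x ∈ d := mem_of_end hend
      have hxy : x ≠ y := by
        have hd : List.Disjoint (o ++ d) (y :: i) := fun a ha hb => (List.nodup_append.mp hg).2.2 a ha a hb rfl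
        intro hE
        exact hd (show x ∈ o ++ d by simp [hmemd]) (show x ∈ y :: i by simp [hE])
      cases d with
      | nil => simp at hmemd
      | cons b d' =>
      have hend₂ := not_stuck (N := N) rest ⟨o, y :: b :: d', i⟩ x hc₂ hlast₂ hg₂
        (by simp at hmemd ⊢; tauto) hx
      have hlq : (y :: b :: d').getLast? = some x := by
        rcases hend₂ with h | h
        · exfalso; simp at h; exact hxy h.symm
        · exact h
      obtain ⟨t₂, r₂, hst₂, hout₂, hcr₂, hlastr₂, hltr₂⟩ :=
        ih ⟨o, y :: b :: d', i⟩ x hc₂ hlast₂ hg₂ (Or.inr hlq) hx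
      rcases step_output_snoc hst₂ hout₂ with ⟨hh, ht₂⟩ | ⟨hh, ht₂⟩
      · exfalso; simp at hh; exact hxy hh.symm
      · have hdl : (b :: d').getLast? = some x := by simpa using hh
        have hsplit : (b :: d').dropLast ++ [x] = b :: d' :=
          List.dropLast_append_getLast? x (by simpa using hdl)
        have hstep1 : DequeStep ⟨o, b :: d', y :: i⟩
            ⟨o ++ [x], (b :: d').dropLast, y :: i⟩ := by
          have := DequeStep.popRight o ((b :: d').dropLast) (y :: i) x
          rwa [hsplit] at this
        have hstep2 : DequeStep ⟨o ++ [x], (b :: d').dropLast, y :: i⟩ t₂ := by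
          rw [ht₂]
          simp only
          exact DequeStep.pushLeft (o ++ [x]) ((b :: d').dropLast) i y
        refine ⟨⟨o ++ [x], (b :: d').dropLast, y :: i⟩, t₂ :: r₂, hstep1, rfl,
          List.isChain_cons_cons.mpr ⟨hstep2, hcr₂⟩, by simpa using hlastr₂, ?_⟩
        simp only [List.length_cons]
        omega
    | pushRight o d i y =>
      simp only at hend hx
      have hmemd : x ∈ d := mem_of_end hend
      have hxy : x ≠ y := by
        have hd : List.Disjoint (o ++ d) (y :: i) := fun a ha hb => (List.nodup_append.mp hg).2.2 a ha a hb rfl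
        intro hE
        exact hd (show x ∈ o ++ d by simp [hmemd]) (show x ∈ y :: i by simp [hE])
      cases d with
      | nil => simp at hmemd
      | cons b d' =>
      have hend₂ := not_stuck (N := N) rest ⟨o, (b :: d') ++ [y], i⟩ x hc₂ hlast₂ hg₂
        (by simp at hmemd ⊢; tauto) hx
      have hlq : ((b :: d') ++ [y]).head? = some x := by
        rcases hend₂ with h | h
        · exact h
        · exfalso
          have h2 : ((b :: d') ++ [y]).getLast? = some x := h
          rw [List.getLast?_concat] at h2
          exact hxy (Option.some.inj h2).symm
      obtain ⟨t₂, r₂, hst₂, hout₂, hcr₂, hlastr₂, hltr₂⟩ :=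
        ih ⟨o, (b :: d') ++ [y], i⟩ x hc₂ hlast₂ hg₂ (Or.inl hlq) hx
      rcases step_output_snoc hst₂ hout₂ with ⟨hh, ht₂⟩ | ⟨hh, ht₂⟩
      · have hbx : b = x := by simpa using hh
        subst hbx
        have hstep1 : DequeStep ⟨o, b :: d', y :: i⟩ ⟨o ++ [b], d', y :: i⟩ :=
          DequeStep.popLeft o d' (y :: i) b
        have hstep2 : DequeStep ⟨o ++ [b], d', y :: i⟩ t₂ := by
          rw [ht₂]
          simp only
          exact DequeStep.pushRight (o ++ [b]) d' i y
        refine ⟨⟨o ++ [b], d', y :: i⟩, t₂ :: r₂, hstep1, rfl,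
          List.isChain_cons_cons.mpr ⟨hstep2, hcr₂⟩, by simpa using hlastr₂, ?_⟩
        simp only [List.length_cons]
        omega
      · exfalso
        have h2 : ((b :: d') ++ [y]).getLast? = some x := hh
        rw [List.getLast?_concat] at h2
        exact hxy (Option.some.inj h2).symm


/-- A run (a list of successive states) is reduced if, whenever an end element of the
deque is the next element required by the output, the very next state has that
element popped to the output. -/
def IsReducedRun (r : List DState) : Prop :=
  ∀ (i : ℕ) (h : i + 1 < r.length) (x : ℕ),
    ((r.get ⟨i, by omega⟩).deque.head? = some x ∨
      (r.get ⟨i, by omega⟩).deque.getLast? = some x) →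
    x = (r.get ⟨i, by omega⟩).output.length + 1 →
    (r.get ⟨i + 1, h⟩).output = (r.get ⟨i, by omega⟩).output ++ [x]

lemma reduced_singleton (s : DState) : IsReducedRun [s] := by
  intro i h
  simp at h

lemma reduced_cons {s t : DState} {r : List DState}
    (h0 : ∀ x : ℕ, (s.deque.head? = some x ∨ s.deque.getLast? = some x) →
      x = s.output.length + 1 → t.output = s.output ++ [x])
    (h1 : IsReducedRun (t :: r)) : IsReducedRun (s :: t :: r) := by
  intro i h x hx he
  match i with
  | 0 => exact h0 x hx he
  | (j : ℕ) + 1 =>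
    have hj : j + 1 < (t :: r).length := by simpa using h
    have := h1 j hj x (by simpa using hx) (by simpa using he)
    simpa using this

lemma build {N : ℕ} : ∀ (m : ℕ) (r : List DState) (s : DState), r.length ≤ m →
    List.Chain' DequeStep (s :: r) → (s :: r).getLast? = some (Dfinal N) → Good s →
    ∃ r' : List DState, List.Chain' DequeStep (s :: r') ∧
      (s :: r').getLast? = some (Dfinal N) ∧ IsReducedRun (s :: r') := by
  intro m
  induction m with
  | zero =>
    intro r s hlen hc hlast _
    have : r = [] := List.length_eq_zero_iff.mp (Nat.le_zero.mp hlen)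
    subst this
    exact ⟨[], hc, hlast, reduced_singleton s⟩
  | succ m ih =>
    intro r s hlen hc hlast hg
    cases r with
    | nil => exact ⟨[], hc, hlast, reduced_singleton s⟩
    | cons s₂ rest =>
      by_cases hx : s.deque.head? = some (s.output.length + 1) ∨
          s.deque.getLast? = some (s.output.length + 1)
      · obtain ⟨t, r', hst, hout, hc', hlast', hlt⟩ :=
          exchange (N := N) (s₂ :: rest) s (s.output.length + 1) hc hlast hg hx rfl
        have hgt : Good t := good_step hg hst
        obtain ⟨r₂, hc₂, hlast₂, hred₂⟩ := ih r' t
          (by simp at hlen hlt; omega) hc' hlast' hgt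
        refine ⟨t :: r₂, List.isChain_cons_cons.mpr ⟨hst, hc₂⟩, by simpa using hlast₂, ?_⟩
        refine reduced_cons ?_ hred₂
        intro x hex hxe
        rw [hxe]
        exact hout
      · have h1 : DequeStep s s₂ := (List.isChain_cons_cons.mp hc).1
        obtain ⟨r₂, hc₂, hlast₂, hred₂⟩ := ih rest s₂ (by simp at hlen; omega)
          (List.isChain_cons_cons.mp hc).2 (by simpa using hlast) (good_step hg h1)
        refine ⟨s₂ :: r₂, List.isChain_cons_cons.mpr ⟨h1, hc₂⟩, by simpa using hlast₂, ?_⟩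
        refine reduced_cons ?_ hred₂
        intro x hex hxe
        subst hxe
        exact absurd hex hx

/-- Every deque-sortable permutation can be sorted by a reduced run. -/
theorem dequeSortable_has_reduced_run (l : List ℕ) (hl : DequeSortable l) :
    ∃ r : List DState, List.Chain' DequeStep r ∧
      r.head? = some ⟨[], [], l⟩ ∧
      r.getLast? = some ⟨List.range' 1 l.length, [], []⟩ ∧
      IsReducedRun r := by
  obtain ⟨c, hchain, hlastc⟩ := List.exists_isChain_cons_of_relationReflTransGen hl
  have hc : List.Chain' DequeStep ((⟨[], [], l⟩ : DState) :: c) := hchain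
  have hlast : ((⟨[], [], l⟩ : DState) :: c).getLast? = some (Dfinal l.length) :=
    (List.getLast?_eq_getLast (List.cons_ne_nil _ _)).trans (congrArg some hlastc)
  have hg : Good ⟨[], [], l⟩ := by
    have hp := run_perm (N := l.length) c _ hc hlast
    simp only [Good]
    exact hp.nodup_iff.mpr List.nodup_range'
  obtain ⟨r', hc', hlast', hred⟩ := build (N := l.length) c.length c _ le_rfl hc hlast hg
  exact ⟨⟨[], [], l⟩ :: r', hc', rfl, hlast', hred⟩
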